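/- Define L_0 = 1 and L_m = ∫_0^1 m·t^{m-1}·sqrt((1-t)/(1+t)) dt for m ≥ 1. Then L_{m+2} = L_m - L_{m+1}/(m+1) for all m ≥ 0. -/

import Mathlib

open Real intervalIntegral

lemma sqrt_id (t : ℝ) (h1 : t < 1) :
    Real.sqrt ((1 - t) / (1 + t)) = (1 - t) / Real.sqrt (1 - t^2) := by
  have ht1 : (0:ℝ) ≤ 1 - t := by linarith
  rw [Real.sqrt_div ht1]
  have : 1 - t^2 = (1-t) * (1+t) := by ring
  rw [this, Real.sqrt_mul ht1, div_mul_eq_div_div]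
  congr 1
  rcases eq_or_lt_of_le ht1 with h | h
  · rw [← h]; simp
  · rw [eq_div_iff (ne_of_gt (Real.sqrt_pos.2 h))]
    exact (Real.mul_self_sqrt ht1)

lemma deriv_F (m : ℕ) (t : ℝ) (ht : t ∈ Set.Ioo (0:ℝ) 1) :
    HasDerivAt (fun x : ℝ => (x^(m+1) - x^m) * Real.sqrt (1 - x^2))
      ((((m:ℝ)+2) * t^(m+1) + t^m - m * t^(m-1)) * Real.sqrt ((1 - t)/(1 + t))) t := by
  obtain ⟨h0, h1⟩ := ht
  have ht2 : (0:ℝ) < 1 - t^2 := by nlinarith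
  have hs : Real.sqrt (1 - t^2) ≠ 0 := ne_of_gt (Real.sqrt_pos.2 ht2)
  have hd1 : HasDerivAt (fun x : ℝ => 1 - x^2) (-(2 * t^1)) t :=
    (hasDerivAt_pow 2 t).const_sub 1
  have hd2 : HasDerivAt (fun x : ℝ => Real.sqrt (1 - x^2))
      (1 / (2 * Real.sqrt (1 - t^2)) * (-(2 * t^1))) t :=
    (Real.hasDerivAt_sqrt (ne_of_gt ht2)).comp t hd1
  have hp : HasDerivAt (fun x : ℝ => x^(m+1) - x^m)
      (((m:ℝ)+1) * t^m - m * t^(m-1)) t := by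
    have := (hasDerivAt_pow (m+1) t).fun_sub (hasDerivAt_pow m t)
    simpa using this
  have hF := hp.fun_mul hd2
  refine hF.congr_deriv (Eq.symm ?_)
  rw [sqrt_id t h1]
  have hsq : Real.sqrt (1 - t^2) * Real.sqrt (1 - t^2) = 1 - t^2 :=
    Real.mul_self_sqrt (le_of_lt ht2)
  have hnum : (((m:ℝ)+2) * t^(m+1) + t^m - m * t^(m-1)) * (1-t)
      = (((m:ℝ)+1) * t^m - m * t^(m-1)) * (1 - t^2) - t * (t^(m+1) - t^m) := by
    rcases m with _ | k
    · norm_num; ring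
    · have e1 : k + 1 - 1 = k := rfl
      rw [e1]
      have p1 : t^(k+1) = t^k * t := pow_succ t k
      have p2 : t^(k+1+1) = t^k * t * t := by rw [pow_succ, p1]
      rw [p1, p2]
      push_cast
      ring
  have step : (((m:ℝ)+1) * t^m - m * t^(m-1)) * Real.sqrt (1 - t^2)
      + (t^(m+1) - t^m) * (1 / (2 * Real.sqrt (1 - t^2)) * (-(2 * t^1)))
      = ((((m:ℝ)+1) * t^m - m * t^(m-1)) * (1 - t^2) - t * (t^(m+1) - t^m))
        / Real.sqrt (1 - t^2) := by
    have h1 : (t^(m+1) - t^m) * (1 / (2 * Real.sqrt (1 - t^2)) * (-(2 * t^1)))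
        = (-(t * (t^(m+1) - t^m))) / Real.sqrt (1 - t^2) := by
      field_simp
    have h2 : (((m:ℝ)+1) * t^m - m * t^(m-1)) * Real.sqrt (1 - t^2)
        = ((((m:ℝ)+1) * t^m - m * t^(m-1)) * (1 - t^2)) / Real.sqrt (1 - t^2) := by
      rw [eq_div_iff hs, mul_assoc, hsq]
    rw [h1, h2, ← add_div]
    ring_nf
  rw [step, ← hnum]
  ring
lemma contf : ContinuousOn (fun t : ℝ => Real.sqrt ((1 - t) / (1 + t))) (Set.Icc (0:ℝ) 1) := by
  apply ContinuousOn.sqrt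
  apply ContinuousOn.div
  · fun_prop
  · fun_prop
  · intro t ht
    simp only [Set.mem_Icc] at ht
    nlinarith [ht.1]

lemma intg (g : ℝ → ℝ) (hg : Continuous g) :
    IntervalIntegrable (fun t : ℝ => g t * Real.sqrt ((1 - t) / (1 + t)))
      MeasureTheory.volume 0 1 := by
  apply ContinuousOn.intervalIntegrable
  rw [Set.uIcc_of_le zero_le_one]
  exact hg.continuousOn.mul contf

lemma key (m : ℕ) :
    ∫ t in (0:ℝ)..1, (((m:ℝ)+2) * t^(m+1) + t^m - m * t^(m-1)) *
      Real.sqrt ((1 - t) / (1 + t)) = (0:ℝ)^m := by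
  have hcont : ContinuousOn (fun x : ℝ => (x^(m+1) - x^m) * Real.sqrt (1 - x^2))
      (Set.Icc (0:ℝ) 1) := by
    apply Continuous.continuousOn
    fun_prop
  have hint : IntervalIntegrable
      (fun t : ℝ => (((m:ℝ)+2) * t^(m+1) + t^m - m * t^(m-1)) *
        Real.sqrt ((1 - t) / (1 + t))) MeasureTheory.volume 0 1 :=
    intg _ (by fun_prop)
  have := intervalIntegral.integral_eq_sub_of_hasDerivAt_of_le zero_le_one hcont
    (fun t ht => deriv_F m t ht) hint
  rw [this]
  norm_num

theorem stmt_9 (L : ℕ → ℝ)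
    (hL0 : L 0 = 1)
    (hL : ∀ m : ℕ, 1 ≤ m →
      L m = ∫ t in (0:ℝ)..1, m * t ^ (m - 1) * Real.sqrt ((1 - t) / (1 + t))) :
    ∀ m : ℕ, L (m + 2) = L m - L (m + 1) / (m + 1) := by
  have hLm : ∀ n : ℕ, L n = (0:ℝ)^n +
      ∫ t in (0:ℝ)..1, (n:ℝ) * t ^ (n - 1) * Real.sqrt ((1 - t) / (1 + t)) := by
    intro n
    rcases n with _ | k
    · simp [hL0]
    · rw [hL (k+1) (by omega)]
      simp
  intro m
  have h2 := hL (m+2) (by omega)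
  have h1 := hL (m+1) (by omega)
  have e2 : m + 2 - 1 = m + 1 := rfl
  have e1 : m + 1 - 1 = m := rfl
  rw [e2] at h2
  rw [e1] at h1
  push_cast at h2 h1
  -- integrability of the pieces
  have I1 : IntervalIntegrable (fun t : ℝ => (((m:ℝ)+2) * t^(m+1)) *
      Real.sqrt ((1 - t) / (1 + t))) MeasureTheory.volume 0 1 := intg _ (by fun_prop)
  have I2 : IntervalIntegrable (fun t : ℝ => (t^m) *
      Real.sqrt ((1 - t) / (1 + t))) MeasureTheory.volume 0 1 := intg _ (by fun_prop)
  have I3 : IntervalIntegrable (fun t : ℝ => ((m:ℝ) * t^(m-1)) *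
      Real.sqrt ((1 - t) / (1 + t))) MeasureTheory.volume 0 1 := intg _ (by fun_prop)
  have hk := key m
  have heq : ∀ t : ℝ, (((m:ℝ)+2) * t^(m+1) + t^m - m * t^(m-1)) *
      Real.sqrt ((1 - t) / (1 + t))
      = (((m:ℝ)+2) * t^(m+1)) * Real.sqrt ((1 - t) / (1 + t))
        + (t^m) * Real.sqrt ((1 - t) / (1 + t))
        - ((m:ℝ) * t^(m-1)) * Real.sqrt ((1 - t) / (1 + t)) := fun t => by ring
  simp only [heq] at hk
  rw [intervalIntegral.integral_sub (I1.add I2) I3,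
    intervalIntegral.integral_add I1 I2] at hk
  -- pull constants out
  have c2 : (∫ t in (0:ℝ)..1, (((m:ℝ)+2) * t^(m+1)) * Real.sqrt ((1 - t) / (1 + t)))
      = ((m:ℝ)+2) * ∫ t in (0:ℝ)..1, t^(m+1) * Real.sqrt ((1 - t) / (1 + t)) := by
    rw [← intervalIntegral.integral_const_mul]
    congr 1; funext t; ring
  have c1 : (∫ t in (0:ℝ)..1, (((m:ℝ)+1) * t^m) * Real.sqrt ((1 - t) / (1 + t)))
      = ((m:ℝ)+1) * ∫ t in (0:ℝ)..1, t^m * Real.sqrt ((1 - t) / (1 + t)) := by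
    rw [← intervalIntegral.integral_const_mul]
    congr 1; funext t; ring
  have hm1 : ((m:ℝ)+1) ≠ 0 := by positivity
  rw [h2, h1, hLm m, c1, mul_div_cancel_left₀ _ hm1]
  linarith [hk]
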